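/- Let X₁(t) and X₂(t) be the α-dissipative solutions of the Lagrangian system with initial data X₁(0), X₂(0) ∈ F. Then for every t ≥ 0, ‖G₁₂(·,t)‖_{L¹(ℝ)} ≤ ‖G₁₂(·,0)‖_{L¹(ℝ)} and ‖G₁₂(·,t)‖_{L²(ℝ)} ≤ ‖G₁₂(·,0)‖_{L²(ℝ)}; that is, the L¹ and L² norms of G₁₂ are non-increasing in time. -/

import Mathlib

open MeasureTheory Filter Set Real
open scoped ENNReal Classical

noncomputable section

/-- A Lagrangian quadruple `X = (y, U, H, V)` of real-valued functions on `ℝ`. -/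
structure LagQuad where
  y : ℝ → ℝ
  U : ℝ → ℝ
  H : ℝ → ℝ
  V : ℝ → ℝ

/-- The real-valued `L^p` norm of a function `ℝ → ℝ` (Lebesgue measure). -/
def nrm (p : ℝ≥0∞) (f : ℝ → ℝ) : ℝ := (eLpNorm f p volume).toReal

/-- `f` is bounded and Lipschitz. -/
def bddLip (f : ℝ → ℝ) : Prop := (∃ C, ∀ x, |f x| ≤ C) ∧ (∃ K, LipschitzWith K f)

/-- The set `F` of Lagrangian coordinates, for the dissipation parameter `α`. -/
def inF (α : ℝ) (X : LagQuad) : Prop :=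
  bddLip (fun ξ => X.y ξ - ξ) ∧ bddLip X.U ∧ bddLip X.H ∧ bddLip X.V ∧
  (∀ᵐ (ξ : ℝ) ∂volume, 0 ≤ deriv X.y ξ) ∧ (∀ᵐ (ξ : ℝ) ∂volume, 0 ≤ deriv X.H ξ) ∧
  (∃ c > (0 : ℝ), ∀ᵐ (ξ : ℝ) ∂volume, c ≤ deriv X.y ξ + deriv X.H ξ) ∧
  (∀ᵐ (ξ : ℝ) ∂volume, deriv X.y ξ * deriv X.V ξ = (deriv X.U ξ) ^ 2) ∧
  (∀ᵐ (ξ : ℝ) ∂volume, 0 ≤ deriv X.V ξ ∧ deriv X.V ξ ≤ deriv X.H ξ) ∧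
  (α = 1 → ∀ᵐ (ξ : ℝ) ∂volume,
    (deriv X.y ξ = 0 → deriv X.V ξ = 0) ∧ (0 < deriv X.y ξ → deriv X.V ξ = deriv X.H ξ)) ∧
  (α < 1 → ∃ κ : ℝ → ℝ, (∀ ξ, κ ξ = 1 - α ∨ κ ξ = 1) ∧
    (∀ᵐ (ξ : ℝ) ∂volume, deriv X.V ξ = κ ξ * deriv X.H ξ ∧ (deriv X.U ξ < 0 → κ ξ = 1)))

/-- The subset `F₀ = {X ∈ F : y + H = id}`. -/
def inF0 (α : ℝ) (X : LagQuad) : Prop := inF α X ∧ ∀ ξ, X.y ξ + X.H ξ = ξ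

/-- The wave-breaking time `τ` of a Lagrangian quadruple. -/
def tauOf (X : LagQuad) (ξ : ℝ) : ℝ≥0∞ :=
  if deriv X.U ξ < 0 then ENNReal.ofReal (-2 * deriv X.y ξ / deriv X.U ξ)
  else if deriv X.U ξ = 0 ∧ deriv X.y ξ = 0 then 0
  else ⊤

/-- `A = {ξ : U'(ξ) ≥ 0}`. -/
def Aset (X : LagQuad) : Set ℝ := {ξ | 0 ≤ deriv X.U ξ}

/-- `Ω(t) = (A₁ ∩ A₂) ∪ {ξ : t < τ₁(ξ) = τ₂(ξ) < ∞}`. -/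
def OmegaT (τ₁ τ₂ : ℝ → ℝ≥0∞) (t : ℝ) (X₁ X₂ : LagQuad) : Set ℝ :=
  (Aset X₁ ∩ Aset X₂) ∪ {ξ | ENNReal.ofReal t < τ₁ ξ ∧ τ₁ ξ = τ₂ ξ ∧ τ₂ ξ < ⊤}

/-- `G₁₂ = |V₁' − V₂'|·1_Ω + max(V₁',V₂')·1_{Ωᶜ}`. -/
def GfunT (τ₁ τ₂ : ℝ → ℝ≥0∞) (t : ℝ) (X₁ X₂ : LagQuad) (ξ : ℝ) : ℝ :=
  (OmegaT τ₁ τ₂ t X₁ X₂).indicator (fun η => |deriv X₁.V η - deriv X₂.V η|) ξ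
    + ((OmegaT τ₁ τ₂ t X₁ X₂)ᶜ).indicator (fun η => max (deriv X₁.V η) (deriv X₂.V η)) ξ

/-- The Lagrangian distance, with wave-breaking times `τ₁, τ₂` and time parameter `t`. -/
def ddT (τ₁ τ₂ : ℝ → ℝ≥0∞) (t : ℝ) (X₁ X₂ : LagQuad) : ℝ :=
  nrm ⊤ (fun ξ => X₁.y ξ - X₂.y ξ) + nrm ⊤ (fun ξ => X₁.U ξ - X₂.U ξ)
    + nrm 2 (fun ξ => deriv X₁.y ξ - deriv X₂.y ξ)
    + nrm 2 (fun ξ => deriv X₁.U ξ - deriv X₂.U ξ)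
    + nrm ⊤ (fun ξ => X₁.H ξ - X₂.H ξ)
    + nrm 1 (GfunT τ₁ τ₂ t X₁ X₂) + nrm 2 (GfunT τ₁ τ₂ t X₁ X₂)

/-- The metric `d` on `F`. -/
def dmet (X₁ X₂ : LagQuad) : ℝ := ddT (tauOf X₁) (tauOf X₂) 0 X₁ X₂

/-- The norm `‖X_A − X_B‖` (sum of the four sup-norms). -/
def xnorm (XA XB : LagQuad) : ℝ :=
  nrm ⊤ (fun ξ => XA.y ξ - XB.y ξ) + nrm ⊤ (fun ξ => XA.U ξ - XB.U ξ)
    + nrm ⊤ (fun ξ => XA.H ξ - XB.H ξ) + nrm ⊤ (fun ξ => XA.V ξ - XB.V ξ)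

/-- The relabelling group `G`. -/
def inG (f : ℝ → ℝ) : Prop :=
  Function.Bijective f ∧ bddLip (fun x => f x - x) ∧
    bddLip (fun x => Function.invFun f x - x) ∧
    MemLp (fun x => deriv f x - 1) 2 volume

/-- The relabelling action `X • f`. -/
def act (X : LagQuad) (f : ℝ → ℝ) : LagQuad :=
  ⟨fun ξ => X.y (f ξ), fun ξ => X.U (f ξ), fun ξ => X.H (f ξ), fun ξ => X.V (f ξ)⟩

/-- `Π(X) = X • (y + H)⁻¹`. -/
def PiMap (X : LagQuad) : LagQuad := act X (Function.invFun (fun ξ => X.y ξ + X.H ξ))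

/-- `J(X_A, X_B) = inf_{f,g ∈ G} ( d(X_A, X_B•f) + d(X_A•g, X_B) )`. -/
def Jmet (XA XB : LagQuad) : ℝ :=
  sInf {r | ∃ f g, inG f ∧ inG g ∧ r = dmet XA (act XB f) + dmet (act XA g) XB}

/-- `d_F`, the infimum over finite sequences in `F₀` joining `Π X_A` to `Π X_B`. -/
def dFmet (α : ℝ) (XA XB : LagQuad) : ℝ :=
  sInf {r | ∃ (N : ℕ) (Xs : ℕ → LagQuad), (∀ n ≤ N, inF0 α (Xs n)) ∧
    Xs 0 = PiMap XA ∧ Xs N = PiMap XB ∧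
    r = ∑ n ∈ Finset.range N, Jmet (Xs (n + 1)) (Xs n)}

/-- The set of points that have experienced wave breaking by time `t`. -/
def breakSet (X0 : LagQuad) (t : ℝ) : Set ℝ :=
  {η | 0 < tauOf X0 η ∧ tauOf X0 η ≤ ENNReal.ofReal t}

/-- `V(ξ,t) = ∫_{−∞}^ξ V₀'(η)(1 − α·1_{t ≥ τ(η) > 0}(η)) dη`. -/
def Vsol (α : ℝ) (X0 : LagQuad) (t : ℝ) (ξ : ℝ) : ℝ :=
  ∫ η in Set.Iio ξ,
    deriv X0.V η * (1 - α * (breakSet X0 t).indicator (fun _ => (1 : ℝ)) η)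

/-- `U(ξ,t) = U₀(ξ) + ∫₀ᵗ (½ V(ξ,s) − ¼ V_∞(s)) ds`. -/
def Usol (α : ℝ) (X0 : LagQuad) (t : ℝ) (ξ : ℝ) : ℝ :=
  X0.U ξ + ∫ s in (0:ℝ)..t,
    ((1 / 2) * Vsol α X0 s ξ - (1 / 4) * limUnder Filter.atTop (Vsol α X0 s))

/-- `y(ξ,t) = y₀(ξ) + ∫₀ᵗ U(ξ,s) ds`. -/
def ysol (α : ℝ) (X0 : LagQuad) (t : ℝ) (ξ : ℝ) : ℝ :=
  X0.y ξ + ∫ s in (0:ℝ)..t, Usol α X0 s ξ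

/-- The α-dissipative solution of the Lagrangian system at time `t`. -/
def sol (α : ℝ) (X0 : LagQuad) (t : ℝ) : LagQuad :=
  ⟨ysol α X0 t, Usol α X0 t, X0.H, Vsol α X0 t⟩

/-- The Eulerian velocity `u` of `M(X)`: `u(x) = U(ξ)` whenever `x = y(ξ)`. -/
def Mu (X : LagQuad) : ℝ → ℝ := fun x => X.U (Function.invFun X.y x)

/-- The Eulerian energy measure `μ = y_#(V' dξ)` of `M(X)`. -/
def Mmu (X : LagQuad) : Measure ℝ :=
  Measure.map X.y (volume.withDensity fun ξ => ENNReal.ofReal (deriv X.V ξ))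

/-- The Eulerian past-energy measure `ν = y_#(H' dξ)` of `M(X)`. -/
def Mnu (X : LagQuad) : Measure ℝ :=
  Measure.map X.y (volume.withDensity fun ξ => ENNReal.ofReal (deriv X.H ξ))

/-- The set `D` of Eulerian coordinates `(u, μ, ν)`. -/
def inD (α : ℝ) (u : ℝ → ℝ) (μ ν : Measure ℝ) : Prop :=
  (∃ C, ∀ x, |u x| ≤ C) ∧
  (∀ x y : ℝ, u y - u x = ∫ s in x..y, deriv u s) ∧
  MemLp (deriv u) 2 volume ∧
  IsFiniteMeasure μ ∧ IsFiniteMeasure ν ∧ μ ≤ ν ∧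
  (μ.rnDeriv volume =ᵐ[volume] fun x => ENNReal.ofReal ((deriv u x) ^ 2)) ∧
  (α = 1 → μ = volume.withDensity (fun x => ENNReal.ofReal ((deriv u x) ^ 2)) ∧
    ν.rnDeriv volume =ᵐ[volume] fun x => ENNReal.ofReal ((deriv u x) ^ 2)) ∧
  (α < 1 → ∃ k : ℝ → ℝ, (∀ x, k x = 1 ∨ k x = 1 - α) ∧
    (∀ x, deriv u x < 0 → k x = 1) ∧ μ = ν.withDensity (fun x => ENNReal.ofReal (k x)))

/-- `y(ξ) = sup { x : x + ν((−∞,x)) < ξ }` — the Lagrangian characteristic of `(u,μ,ν)`. -/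
def yL (ν : Measure ℝ) (ξ : ℝ) : ℝ := sSup {x : ℝ | x + (ν (Set.Iio x)).toReal < ξ}

/-- The mapping `L : D → F₀` from Eulerian to Lagrangian coordinates. -/
def Lmap (u : ℝ → ℝ) (μ ν : Measure ℝ) : LagQuad :=
  ⟨yL ν, fun ξ => u (yL ν ξ), fun ξ => ξ - yL ν ξ,
    fun ξ => ∫ η in Set.Iio ξ,
      deriv (fun ζ => ζ - yL ν ζ) η * (μ.rnDeriv ν (yL ν η)).toReal⟩

/-- The set `D_{0,M}` of Eulerian pairs `(u, μ)` with total energy at most `M`. -/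
def inD0M (α M : ℝ) (u : ℝ → ℝ) (μ : Measure ℝ) : Prop :=
  (∃ C, ∀ x, |u x| ≤ C) ∧
  (∀ x y : ℝ, u y - u x = ∫ s in x..y, deriv u s) ∧
  MemLp (deriv u) 2 volume ∧
  IsFiniteMeasure μ ∧
  (μ.rnDeriv volume =ᵐ[volume] fun x => ENNReal.ofReal ((deriv u x) ^ 2)) ∧
  (μ Set.univ).toReal ≤ M ∧
  (α = 1 → μ = volume.withDensity (fun x => ENNReal.ofReal ((deriv u x) ^ 2)))

/-- `J_D((u₁,μ₁),(u₂,μ₂)) = inf over admissible ν₁, ν₂ of d_D((u₁,μ₁,ν₁),(u₂,μ₂,ν₂))`. -/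
def JD (α : ℝ) (u₁ : ℝ → ℝ) (μ₁ : Measure ℝ) (u₂ : ℝ → ℝ) (μ₂ : Measure ℝ) : ℝ :=
  sInf {r | ∃ ν₁ ν₂ : Measure ℝ, inD α u₁ μ₁ ν₁ ∧ inD α u₂ μ₂ ν₂ ∧
    r = dFmet α (Lmap u₁ μ₁ ν₁) (Lmap u₂ μ₂ ν₂)}

/-- The Eulerian metric `d_M` on `D_{0,M}`. -/
def dMmet (α M : ℝ) (uA : ℝ → ℝ) (μA : Measure ℝ) (uB : ℝ → ℝ) (μB : Measure ℝ) : ℝ :=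
  sInf {r | ∃ (N : ℕ) (us : ℕ → ℝ → ℝ) (μs : ℕ → Measure ℝ),
    (∀ n ≤ N, inD0M α M (us n) (μs n)) ∧
    us 0 = uA ∧ μs 0 = μA ∧ us N = uB ∧ μs N = μB ∧
    r = ∑ n ∈ Finset.range N, JD α (us (n + 1)) (μs (n + 1)) (us n) (μs n)}

end

noncomputable section S4auxsec
open MeasureTheory Filter Set Real Topology
open scoped ENNReal NNReal Classical

namespace S4aux

set_option maxHeartbeats 1000000

/-- Lebesgue differentiation: the primitive of a nonneg integrable function has
derivative `f x` a.e. -/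
theorem ae_hasDerivAt_primitive0 {f : ℝ → ℝ} (hm : Measurable f) (hi : Integrable f)
    (hnn : ∀ x, 0 ≤ f x) :
    ∀ᵐ x ∂volume, HasDerivAt (fun y => ∫ t in Set.Iio y, f t) (f x) x := by
  set F : ℝ → ℝ := fun y => ∫ t in Set.Iio y, f t with hF
  have hmono : Monotone F := by
    intro a b hab
    exact setIntegral_mono_set hi.integrableOn (Eventually.of_forall hnn)
      ((Iio_subset_Iio hab).eventuallyLE)
  have hsub : ∀ a b : ℝ, a ≤ b → F b - F a = ∫ t in Set.Ioc a b, f t := by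
    intro a b hab
    have hU : Set.Iio a ∪ Set.Ico a b = Set.Iio b := Set.Iio_union_Ico_eq_Iio hab
    have hd : Disjoint (Set.Iio a) (Set.Ico a b) := by
      refine Set.disjoint_left.2 fun x hx hx2 => ?_
      exact absurd hx2.1 (not_le.2 hx)
    have h2 := setIntegral_union hd measurableSet_Ico hi.integrableOn hi.integrableOn (f := f)
      (μ := volume)
    rw [hU] at h2
    rw [hF]; simp only; rw [h2, integral_Ico_eq_integral_Ioo, ← integral_Ioc_eq_integral_Ioo]; ring
  have hFeq : ∀ y : ℝ, F y = F 0 + ∫ t in (0:ℝ)..y, f t := by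
    intro y
    rcases le_total 0 y with h | h
    · rw [intervalIntegral.integral_of_le h, ← hsub 0 y h]; ring
    · rw [intervalIntegral.integral_symm, intervalIntegral.integral_of_le h,
        ← hsub y 0 h]; ring
  have hcont : Continuous F := by
    have : Continuous fun y => F 0 + ∫ t in (0:ℝ)..y, f t :=
      continuous_const.add (intervalIntegral.continuous_primitive
        (fun a b => hi.intervalIntegrable) 0)
    exact this.congr fun y => (hFeq y).symm
  set S : StieltjesFunction ℝ := ⟨F, hmono, fun x => hcont.continuousWithinAt⟩ with hS
  have hbot : Tendsto F atBot (𝓝 0) := by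
    have h0 : (0:ℝ) = ∫ t : ℝ, (0:ℝ) := by simp
    rw [h0]
    have := MeasureTheory.tendsto_integral_filter_of_dominated_convergence (μ := volume)
      (l := atBot) (F := fun (y : ℝ) (t : ℝ) => (Set.Iio y).indicator f t) (f := fun _ => (0:ℝ))
      (bound := fun t => |f t|)
      (Eventually.of_forall fun y => (hm.indicator measurableSet_Iio).aestronglyMeasurable)
      (Eventually.of_forall fun y => Eventually.of_forall fun t =>
        (norm_indicator_le_norm_self f t).trans (le_of_eq (Real.norm_eq_abs _)))
      hi.abs
      (Eventually.of_forall fun t => by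
        refine Tendsto.congr' ?_ tendsto_const_nhds
        filter_upwards [eventually_le_atBot t] with y hy
        exact (Set.indicator_of_notMem (by simpa using hy.not_gt) f).symm)
    refine Tendsto.congr (fun y => ?_) this
    rw [integral_indicator measurableSet_Iio]
  have htop : Tendsto F atTop (𝓝 (∫ t, f t)) := by
    have := MeasureTheory.tendsto_integral_filter_of_dominated_convergence (μ := volume)
      (l := atTop) (F := fun (y : ℝ) (t : ℝ) => (Set.Iio y).indicator f t) (f := f)
      (bound := fun t => |f t|)
      (Eventually.of_forall fun y => (hm.indicator measurableSet_Iio).aestronglyMeasurable)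
      (Eventually.of_forall fun y => Eventually.of_forall fun t =>
        (norm_indicator_le_norm_self f t).trans (le_of_eq (Real.norm_eq_abs _)))
      hi.abs
      (Eventually.of_forall fun t => by
        refine Tendsto.congr' ?_ tendsto_const_nhds
        filter_upwards [eventually_gt_atTop t] with y hy
        exact (Set.indicator_of_mem (by simpa using hy) f).symm)
    refine Tendsto.congr (fun y => ?_) this
    rw [integral_indicator measurableSet_Iio]
  have hSIic : ∀ x, S.measure (Set.Iic x) = ENNReal.ofReal (F x) := by
    intro x
    have := S.measure_Iic (l := 0) hbot x
    simpa using this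
  haveI hfin : IsFiniteMeasure S.measure := by
    constructor
    rw [S.measure_univ (l := 0) (u := ∫ t, f t) hbot htop]
    exact ENNReal.ofReal_lt_top
  haveI hwfin : IsFiniteMeasure (volume.withDensity fun x => ENNReal.ofReal (f x)) := by
    refine isFiniteMeasure_withDensity ?_
    rw [← ofReal_integral_eq_lintegral_ofReal hi (Eventually.of_forall hnn)]
    exact ENNReal.ofReal_ne_top
  have hMeq : S.measure = volume.withDensity fun x => ENNReal.ofReal (f x) := by
    refine MeasureTheory.Measure.ext_of_Iic _ _ fun a => ?_
    rw [hSIic, withDensity_apply _ measurableSet_Iic,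
      ← ofReal_integral_eq_lintegral_ofReal hi.integrableOn
        (ae_restrict_of_ae (Eventually.of_forall hnn))]
    congr 1
    exact setIntegral_congr_set Iio_ae_eq_Iic
  filter_upwards [S.ae_hasDerivAt,
    Measure.rnDeriv_withDensity volume (hm.ennreal_ofReal)] with x hx hrn
  rw [hMeq, hrn, ENNReal.toReal_ofReal (hnn x)] at hx
  exact hx

theorem ae_hasDerivAt_primitive {f : ℝ → ℝ} (hm : Measurable f) (hi : Integrable f)
    (hnn : ∀ᵐ x ∂volume, 0 ≤ f x) :
    ∀ᵐ x ∂volume, HasDerivAt (fun y => ∫ t in Set.Iio y, f t) (f x) x := by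
  have habs : ∀ y : ℝ, (∫ t in Set.Iio y, |f t|) = ∫ t in Set.Iio y, f t := by
    intro y
    refine integral_congr_ae (ae_restrict_of_ae (hnn.mono fun x hx => abs_of_nonneg hx))
  filter_upwards [ae_hasDerivAt_primitive0 hm.abs hi.abs (fun x => abs_nonneg _), hnn]
    with x hx hx2
  simp only [habs] at hx
  rw [abs_of_nonneg hx2] at hx
  exact hx

theorem integrable_deriv {f : ℝ → ℝ} {C : ℝ} {K : ℝ≥0}
    (hC : ∀ x, |f x| ≤ C) (hK : LipschitzWith K f)
    (hnn : ∀ᵐ x ∂volume, 0 ≤ deriv f x) : Integrable (deriv f) volume := by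
  have hmeas : Measurable (deriv f) := measurable_deriv f
  have hbd : ∀ x, |deriv f x| ≤ K := fun x => by
    simpa [Real.norm_eq_abs] using norm_deriv_le_of_lipschitz (x₀ := x) hK
  set g : ℝ → ℝ := fun x => f x + K * x with hg
  have hmono : Monotone g := by
    intro a b hab
    have h1 : |f a - f b| ≤ K * |a - b| := by
      have := hK.dist_le_mul a b
      simpa [Real.dist_eq] using this
    have h2 : |a - b| = b - a := by rw [abs_sub_comm]; exact abs_of_nonneg (by linarith)
    rw [h2] at h1
    have h3 := (abs_le.1 h1).2
    simp only [hg]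
    linarith
  have hrad : ∀ᵐ x ∂(volume : Measure ℝ), DifferentiableAt ℝ f x := hK.ae_differentiableAt
  set μm := hmono.stieltjesFunction.measure with hμm
  haveI : SigmaFinite μm := sigmaFinite_of_locallyFinite
  have key : ∀ᵐ x ∂volume, ((μm.rnDeriv volume x).toReal) = deriv f x + K := by
    filter_upwards [hmono.ae_hasDerivAt, hrad] with x h1 h2
    have h3 : HasDerivAt g (deriv f x + K) x := by
      exact (h2.hasDerivAt.add ((hasDerivAt_id x).const_mul (K : ℝ))).congr_deriv (by ring)
    exact (h1.unique h3).symm ▸ rfl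
  have hfin_int : ∀ n : ℕ, IntegrableOn (deriv f) (Set.Ioc (-(n:ℝ)) n) volume := by
    intro n
    refine Integrable.mono' (g := fun _ => (K:ℝ))
      (integrableOn_const measure_Ioc_lt_top.ne) hmeas.aestronglyMeasurable.restrict
      (Eventually.of_forall fun x => by simpa [Real.norm_eq_abs] using hbd x)
  have hIbound : ∀ n : ℕ, (∫ x in Set.Ioc (-(n:ℝ)) n, deriv f x) ≤ 2*C + K := by
    intro n
    set s := Set.Ioc (-(n:ℝ)) n with hs
    have hKint : IntegrableOn (fun _ => (K:ℝ)) s volume :=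
      integrableOn_const measure_Ioc_lt_top.ne
    have hrn_int : IntegrableOn (fun x => (μm.rnDeriv volume x).toReal) s volume := by
      refine ((hfin_int n).add hKint).congr ?_
      exact ae_restrict_of_ae (key.mono fun x hx => hx.symm)
    have h1 : (∫ x in s, deriv f x) =
        (∫ x in s, (μm.rnDeriv volume x).toReal) - K * (volume s).toReal := by
      have e1 : (∫ x in s, deriv f x) =
          ∫ x in s, ((μm.rnDeriv volume x).toReal - K) := by
        refine integral_congr_ae (ae_restrict_of_ae (key.mono fun x hx => ?_))
        show deriv f x = (μm.rnDeriv volume x).toReal - (K:ℝ)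
        rw [hx]; ring
      rw [e1, integral_sub hrn_int hKint, integral_const]
      simp [mul_comm]
      exact Or.inl rfl
    have h2 : (∫ x in s, (μm.rnDeriv volume x).toReal) ≤ (μm s).toReal := by
      rw [integral_toReal (μm.measurable_rnDeriv volume).aemeasurable.restrict
        (ae_restrict_of_ae (Measure.rnDeriv_lt_top μm volume))]
      exact ENNReal.toReal_mono measure_Ioc_lt_top.ne (Measure.setLIntegral_rnDeriv_le s)
    have h3 : (μm s).toReal ≤ 2*C + K*(2*n+1) := by
      have hmeq : μm s = ENNReal.ofReal
          (hmono.stieltjesFunction n - hmono.stieltjesFunction (-(n:ℝ))) :=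
        hmono.stieltjesFunction.measure_Ioc _ _
      have hS1 : hmono.stieltjesFunction (n:ℝ) ≤ g ((n:ℝ)+1) := by
        rw [hmono.stieltjesFunction_eq]
        exact hmono.rightLim_le (by linarith)
      have hS2 : g (-(n:ℝ)) ≤ hmono.stieltjesFunction (-(n:ℝ)) := by
        rw [hmono.stieltjesFunction_eq]
        exact hmono.le_rightLim le_rfl
      have hnn2 : (0:ℝ) ≤ hmono.stieltjesFunction n - hmono.stieltjesFunction (-(n:ℝ)) := by
        have := hmono.stieltjesFunction.mono (neg_le_self (Nat.cast_nonneg n))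
        linarith
      rw [hmeq, ENNReal.toReal_ofReal hnn2]
      have hc1 := hC ((n:ℝ)+1)
      have hc2 := hC (-(n:ℝ))
      have hb1 := (abs_le.1 hc1).2
      have hb2 := (abs_le.1 hc2).1
      simp only [hg] at hS1 hS2
      nlinarith
    have h4 : (volume s).toReal = 2*n := by
      rw [hs, Real.volume_Ioc, ENNReal.toReal_ofReal (by have := Nat.cast_nonneg (α := ℝ) n; linarith)]
      ring
    rw [h1, h4]
    nlinarith
  have hLbound : ∀ n : ℕ, (∫⁻ x in Set.Ioc (-(n:ℝ)) n, ENNReal.ofReal (deriv f x)) ≤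
      ENNReal.ofReal (2*C + K) := by
    intro n
    rw [← ofReal_integral_eq_lintegral_ofReal (hfin_int n) (ae_restrict_of_ae hnn)]
    exact ENNReal.ofReal_le_ofReal (hIbound n)
  refine ⟨hmeas.aestronglyMeasurable, ?_⟩
  rw [hasFiniteIntegral_iff_norm]
  have hco : (∫⁻ x, ENNReal.ofReal ‖deriv f x‖ ∂volume) =
      ∫⁻ x, ENNReal.ofReal (deriv f x) ∂volume := by
    refine lintegral_congr_ae (hnn.mono fun x hx => ?_)
    simp only [Real.norm_eq_abs, abs_of_nonneg hx]
  rw [hco]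
  set φ : ℕ → ℝ → ℝ≥0∞ := fun n => (Set.Ioc (-(n:ℝ)) n).indicator
    fun x => ENNReal.ofReal (deriv f x) with hφ
  have hφm : ∀ n, Measurable (φ n) := fun n =>
    (hmeas.ennreal_ofReal).indicator measurableSet_Ioc
  have hφmono : Monotone φ := by
    intro n m hnm
    exact Set.indicator_le_indicator_of_subset
      (Set.Ioc_subset_Ioc (neg_le_neg (by exact_mod_cast hnm)) (by exact_mod_cast hnm))
      (fun x => zero_le)
  have hφsup : ∀ x, (⨆ n, φ n x) = ENNReal.ofReal (deriv f x) := by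
    intro x
    refine le_antisymm (iSup_le fun n => Set.indicator_le_self _ _ x) ?_
    obtain ⟨n, hn⟩ := exists_nat_gt |x|
    have hx2 : x ∈ Set.Ioc (-(n:ℝ)) n :=
      ⟨by linarith [(abs_lt.1 hn).1], le_of_lt (abs_lt.1 hn).2⟩
    refine le_iSup_of_le n (le_of_eq ?_)
    show ENNReal.ofReal (deriv f x) = (Set.Ioc (-(n:ℝ)) (n:ℝ)).indicator
      (fun x => ENNReal.ofReal (deriv f x)) x
    exact (Set.indicator_of_mem hx2 (fun x => ENNReal.ofReal (deriv f x))).symm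
  have hcalc : (∫⁻ x, ENNReal.ofReal (deriv f x) ∂volume) ≤ ENNReal.ofReal (2*C + K) := by
    calc (∫⁻ x, ENNReal.ofReal (deriv f x) ∂volume) = ∫⁻ x, ⨆ n, φ n x ∂volume := by
          refine lintegral_congr fun x => (hφsup x).symm
      _ = ⨆ n, ∫⁻ x, φ n x ∂volume := lintegral_iSup hφm hφmono
      _ = ⨆ n : ℕ, ∫⁻ x in Set.Ioc (-(n:ℝ)) (n:ℝ), ENNReal.ofReal (deriv f x) ∂volume := by
          refine iSup_congr fun n => ?_
          rw [hφ]; simp only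
          rw [lintegral_indicator measurableSet_Ioc]
      _ ≤ ENNReal.ofReal (2*C + K) := iSup_le hLbound
  exact lt_of_le_of_lt hcalc ENNReal.ofReal_lt_top

/-! ### Basic objects -/

/-- The integrand of `Vsol`. -/
def gI (α : ℝ) (X : LagQuad) (t η : ℝ) : ℝ :=
  deriv X.V η * (1 - α * (breakSet X t).indicator (fun _ => (1:ℝ)) η)

theorem Vsol_fun_eq (α : ℝ) (X : LagQuad) (t : ℝ) :
    Vsol α X t = fun ξ => ∫ η in Set.Iio ξ, gI α X t η := rfl

/-- The weight appearing in the `ξ`-derivative of `Usol`. -/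
def wfun (α : ℝ) (X : LagQuad) (t η : ℝ) : ℝ :=
  ∫ s in (0:ℝ)..t, (1 - α * (breakSet X s).indicator (fun _ => (1:ℝ)) η)

theorem ind_mem_01 (s : Set ℝ) (η : ℝ) :
    s.indicator (fun _ => (1:ℝ)) η = 0 ∨ s.indicator (fun _ => (1:ℝ)) η = 1 := by
  by_cases h : η ∈ s
  · right; simp [h]
  · left; simp [h]

theorem factor_nonneg {α b : ℝ} (hα0 : 0 ≤ α) (hα1 : α ≤ 1) (hb : b = 0 ∨ b = 1) :
    0 ≤ 1 - α * b := by rcases hb with h | h <;> subst h <;> simp <;> linarith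

theorem factor_le_one {α b : ℝ} (hα0 : 0 ≤ α) (hb : b = 0 ∨ b = 1) :
    1 - α * b ≤ 1 := by rcases hb with h | h <;> subst h <;> simp <;> linarith

theorem abs_gI_le {α : ℝ} (hα0 : 0 ≤ α) (hα1 : α ≤ 1) (X : LagQuad) (t η : ℝ) :
    |gI α X t η| ≤ |deriv X.V η| := by
  rw [gI, abs_mul]
  refine mul_le_of_le_one_right (abs_nonneg _) ?_
  have hb := ind_mem_01 (breakSet X t) η
  rw [abs_le]
  constructor
  · have := factor_le_one hα0 hb; nlinarith [factor_nonneg hα0 hα1 hb]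
  · exact factor_le_one hα0 hb

/-! ### Measurability -/

theorem measurable_tauOf (X : LagQuad) : Measurable (tauOf X) := by
  unfold tauOf
  refine Measurable.ite (measurableSet_lt (measurable_deriv X.U) measurable_const) ?_ ?_
  · exact ENNReal.measurable_ofReal.comp
      (((measurable_deriv X.y).const_mul (-2)).div (measurable_deriv X.U))
  · refine Measurable.ite ?_ measurable_const measurable_const
    exact (((measurable_deriv X.U) (measurableSet_singleton 0)).inter
      ((measurable_deriv X.y) (measurableSet_singleton 0)))

theorem measurableSet_breakSet (X : LagQuad) (t : ℝ) : MeasurableSet (breakSet X t) := by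
  have h1 : MeasurableSet {η | 0 < tauOf X η} := measurableSet_lt measurable_const
    (measurable_tauOf X)
  have h2 : MeasurableSet {η | tauOf X η ≤ ENNReal.ofReal t} :=
    measurableSet_le (measurable_tauOf X) measurable_const
  exact h1.inter h2

theorem measurable_breakIndicator (X : LagQuad) :
    Measurable (fun p : ℝ × ℝ => (breakSet X p.1).indicator (fun _ => (1:ℝ)) p.2) := by
  have hBset : MeasurableSet {p : ℝ × ℝ | 0 < tauOf X p.2 ∧ tauOf X p.2 ≤ ENNReal.ofReal p.1} := by
    have h1 : MeasurableSet {p : ℝ × ℝ | 0 < tauOf X p.2} :=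
      measurableSet_lt measurable_const ((measurable_tauOf X).comp measurable_snd)
    have h2 : MeasurableSet {p : ℝ × ℝ | tauOf X p.2 ≤ ENNReal.ofReal p.1} :=
      measurableSet_le ((measurable_tauOf X).comp measurable_snd)
        (ENNReal.measurable_ofReal.comp measurable_fst)
    exact h1.inter h2
  have heq : (fun p : ℝ × ℝ => (breakSet X p.1).indicator (fun _ => (1:ℝ)) p.2) =
      ({p : ℝ × ℝ | 0 < tauOf X p.2 ∧ tauOf X p.2 ≤ ENNReal.ofReal p.1}).indicator
        (fun _ => (1:ℝ)) := by
    funext p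
    by_cases h : 0 < tauOf X p.2 ∧ tauOf X p.2 ≤ ENNReal.ofReal p.1
    · rw [Set.indicator_of_mem (show p.2 ∈ breakSet X p.1 from h),
        Set.indicator_of_mem
          (show p ∈ {p : ℝ × ℝ | 0 < tauOf X p.2 ∧ tauOf X p.2 ≤ ENNReal.ofReal p.1} from h)]
    · rw [Set.indicator_of_notMem (show p.2 ∉ breakSet X p.1 from h),
        Set.indicator_of_notMem
          (show p ∉ {p : ℝ × ℝ | 0 < tauOf X p.2 ∧ tauOf X p.2 ≤ ENNReal.ofReal p.1} from h)]
  rw [heq]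
  exact measurable_const.indicator hBset

theorem measurable_gI_uncurry (α : ℝ) (X : LagQuad) :
    Measurable (fun p : ℝ × ℝ => gI α X p.1 p.2) := by
  unfold gI
  exact ((measurable_deriv X.V).comp measurable_snd).mul
    (measurable_const.sub ((measurable_breakIndicator X).const_mul α))

theorem measurable_gI (α : ℝ) (X : LagQuad) (t : ℝ) : Measurable (gI α X t) := by
  have := (measurable_gI_uncurry α X).comp
    ((measurable_const (a := t)).prodMk measurable_id)
  exact this

/-! ### Integrability of `deriv X.V` and of `gI` -/

theorem integrable_derivV {α : ℝ} {X : LagQuad} (hX : inF α X) :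
    Integrable (deriv X.V) volume := by
  obtain ⟨C, hC⟩ := hX.2.2.2.1.1
  obtain ⟨K, hK⟩ := hX.2.2.2.1.2
  exact integrable_deriv hC hK (hX.2.2.2.2.2.2.2.2.1.mono fun ξ h => h.1)

theorem gI_nonneg {α : ℝ} {X : LagQuad} (hα0 : 0 ≤ α) (hα1 : α ≤ 1) (hX : inF α X) (t : ℝ) :
    ∀ᵐ η ∂(volume : Measure ℝ), 0 ≤ gI α X t η := by
  filter_upwards [hX.2.2.2.2.2.2.2.2.1] with η hη
  exact mul_nonneg hη.1 (factor_nonneg hα0 hα1 (ind_mem_01 _ _))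

theorem integrable_gI {α : ℝ} {X : LagQuad} (hα0 : 0 ≤ α) (hα1 : α ≤ 1) (hX : inF α X)
    (t : ℝ) : Integrable (gI α X t) volume := by
  refine (integrable_derivV hX).abs.mono' (measurable_gI α X t).aestronglyMeasurable ?_
  exact Eventually.of_forall fun η => by
    simpa [Real.norm_eq_abs] using abs_gI_le hα0 hα1 X t η

/-! ### Derivative of `Vsol` -/

theorem deriv_Vsol_ae {α : ℝ} {X : LagQuad} (hα0 : 0 ≤ α) (hα1 : α ≤ 1) (hX : inF α X)
    (t : ℝ) : ∀ᵐ ξ ∂(volume : Measure ℝ), deriv (Vsol α X t) ξ = gI α X t ξ := by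
  filter_upwards [ae_hasDerivAt_primitive (measurable_gI α X t) (integrable_gI hα0 hα1 hX t)
    (gI_nonneg hα0 hα1 hX t)] with ξ h
  rw [Vsol_fun_eq]
  exact h.deriv

theorem breakSet_zero (X : LagQuad) : breakSet X 0 = ∅ := by
  ext η
  simp only [breakSet, Set.mem_setOf_eq, Set.mem_empty_iff_false, iff_false, not_and]
  intro h1 h2
  rw [ENNReal.ofReal_zero] at h2
  exact h1.ne' (le_antisymm h2 zero_le)

theorem gI_zero (α : ℝ) (X : LagQuad) (η : ℝ) : gI α X 0 η = deriv X.V η := by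
  rw [gI, breakSet_zero]
  simp

theorem Usol_zero (α : ℝ) (X : LagQuad) : Usol α X 0 = X.U := by
  funext ξ
  rw [Usol, intervalIntegral.integral_same, add_zero]

/-! ### `wfun` facts -/

theorem wfun_intable {α : ℝ} (hα0 : 0 ≤ α) (hα1 : α ≤ 1) (X : LagQuad) {t : ℝ} (ht : 0 ≤ t) (η : ℝ) :
    IntervalIntegrable (fun s => 1 - α * (breakSet X s).indicator (fun _ => (1:ℝ)) η)
      volume 0 t := by
  rw [intervalIntegrable_iff, Set.uIoc_of_le ht]
  have hmeas : Measurable fun s => 1 - α * (breakSet X s).indicator (fun _ => (1:ℝ)) η := by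
    refine measurable_const.sub (Measurable.const_mul ?_ α)
    exact (measurable_breakIndicator X).comp (measurable_id.prodMk measurable_const)
  refine (integrableOn_const measure_Ioc_lt_top.ne).mono' (g := fun _ => (1:ℝ))
    hmeas.aestronglyMeasurable.restrict (Eventually.of_forall fun s => ?_)
  have hb := ind_mem_01 (breakSet X s) η
  show ‖1 - α * (breakSet X s).indicator (fun _ => (1:ℝ)) η‖ ≤ 1
  rw [Real.norm_eq_abs, abs_le]
  exact ⟨by linarith [factor_nonneg hα0 hα1 hb], factor_le_one hα0 hb⟩

theorem wfun_nonneg {α : ℝ} {X : LagQuad} (hα0 : 0 ≤ α) (hα1 : α ≤ 1) {t : ℝ} (ht : 0 ≤ t)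
    (η : ℝ) : 0 ≤ wfun α X t η := by
  refine intervalIntegral.integral_nonneg ht fun s _ => ?_
  exact factor_nonneg hα0 hα1 (ind_mem_01 _ _)

theorem wfun_le {α : ℝ} {X : LagQuad} (hα0 : 0 ≤ α) (hα1 : α ≤ 1) {t : ℝ} (ht : 0 ≤ t) (η : ℝ) :
    wfun α X t η ≤ t := by
  have h1 : wfun α X t η ≤ ∫ s in (0:ℝ)..t, (1:ℝ) := by
    refine intervalIntegral.integral_mono_on ht (wfun_intable hα0 hα1 X ht η)
      intervalIntegrable_const fun s _ => ?_
    exact factor_le_one hα0 (ind_mem_01 _ _)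
  simpa using h1

theorem wfun_eq_break {α : ℝ} {X : LagQuad} {t ξ : ℝ} (ht : 0 ≤ t)
    (h1 : 0 < tauOf X ξ) (h2 : tauOf X ξ ≤ ENNReal.ofReal t) :
    wfun α X t ξ = t - α * (t - (tauOf X ξ).toReal) := by
  set r := (tauOf X ξ).toReal with hr
  have hne : tauOf X ξ ≠ ⊤ := ne_top_of_le_ne_top ENNReal.ofReal_ne_top h2
  have hrpos : 0 < r := ENNReal.toReal_pos h1.ne' hne
  have hrle : r ≤ t := by
    have := ENNReal.toReal_mono ENNReal.ofReal_ne_top h2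
    rwa [ENNReal.toReal_ofReal ht] at this
  have hind : ∀ s : ℝ, (breakSet X s).indicator (fun _ => (1:ℝ)) ξ =
      (Set.Ici r).indicator (fun _ => (1:ℝ)) s := by
    intro s
    by_cases hs : r ≤ s
    · have hmem2 : ξ ∈ breakSet X s := by
        refine ⟨h1, ?_⟩
        calc tauOf X ξ = ENNReal.ofReal r := (ENNReal.ofReal_toReal hne).symm
          _ ≤ ENNReal.ofReal s := ENNReal.ofReal_le_ofReal hs
      rw [Set.indicator_of_mem hmem2, Set.indicator_of_mem (Set.mem_Ici.mpr hs)]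
    · rw [Set.indicator_of_notMem (fun hc => hs (Set.mem_Ici.mp hc)),
        Set.indicator_of_notMem ?_]
      intro hmem
      rcases le_or_gt 0 s with hs0 | hs0
      · refine hs ?_
        have := ENNReal.toReal_mono ENNReal.ofReal_ne_top hmem.2
        rwa [ENNReal.toReal_ofReal hs0] at this
      · have : tauOf X ξ ≤ 0 := by
          have := hmem.2
          rwa [ENNReal.ofReal_of_nonpos hs0.le] at this
        exact h1.ne' (le_antisymm this zero_le)
  have hIci : IntegrableOn ((Set.Ici r).indicator (fun _ => (1:ℝ))) (Set.Ioc 0 t) volume :=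
    (integrableOn_const measure_Ioc_lt_top.ne).indicator measurableSet_Ici
  have hIciInt : IntervalIntegrable ((Set.Ici r).indicator (fun _ => (1:ℝ))) volume 0 t := by
    rw [intervalIntegrable_iff, Set.uIoc_of_le ht]; exact hIci
  have hIval : (∫ s in (0:ℝ)..t, (Set.Ici r).indicator (fun _ => (1:ℝ)) s) = t - r := by
    rw [intervalIntegral.integral_of_le ht, setIntegral_indicator measurableSet_Ici]
    have hseq : Set.Ioc 0 t ∩ Set.Ici r = Set.Icc r t := by
      ext s
      constructor
      · rintro ⟨⟨_, hst⟩, hrs⟩; exact ⟨hrs, hst⟩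
      · rintro ⟨hrs, hst⟩; exact ⟨⟨lt_of_lt_of_le hrpos hrs, hst⟩, hrs⟩
    rw [hseq]
    rw [setIntegral_const, Measure.real, Real.volume_Icc, ENNReal.toReal_ofReal (by linarith)]
    simp
  calc wfun α X t ξ
      = ∫ s in (0:ℝ)..t, (1 - α * (Set.Ici r).indicator (fun _ => (1:ℝ)) s) := by
        rw [wfun]
        exact intervalIntegral.integral_congr fun s _ => by rw [hind s]
    _ = (∫ s in (0:ℝ)..t, (1:ℝ)) - α * ∫ s in (0:ℝ)..t, (Set.Ici r).indicator
          (fun _ => (1:ℝ)) s := by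
        rw [intervalIntegral.integral_sub intervalIntegrable_const (hIciInt.const_mul α),
          intervalIntegral.integral_const_mul]
    _ = t - α * (t - r) := by rw [hIval]; simp

/-! ### Tendsto of primitives at infinity -/

theorem tendsto_primitive_atTop {f : ℝ → ℝ} (hm : Measurable f) (hi : Integrable f) :
    Tendsto (fun y => ∫ t in Set.Iio y, f t) atTop (𝓝 (∫ t, f t)) := by
  have := MeasureTheory.tendsto_integral_filter_of_dominated_convergence (μ := volume)
    (l := atTop) (F := fun (y : ℝ) (t : ℝ) => (Set.Iio y).indicator f t) (f := f)
    (bound := fun t => |f t|)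
    (Eventually.of_forall fun y => (hm.indicator measurableSet_Iio).aestronglyMeasurable)
    (Eventually.of_forall fun y => Eventually.of_forall fun t =>
      (norm_indicator_le_norm_self f t).trans (le_of_eq (Real.norm_eq_abs _)))
    hi.abs
    (Eventually.of_forall fun t => by
      refine Tendsto.congr' ?_ tendsto_const_nhds
      filter_upwards [eventually_gt_atTop t] with y hy
      exact (Set.indicator_of_mem (by simpa using hy) f).symm)
  refine Tendsto.congr (fun y => ?_) this
  rw [integral_indicator measurableSet_Iio]

/-! ### Structure of `Usol` -/

theorem Usol_repr {α : ℝ} {X : LagQuad} (hα0 : 0 ≤ α) (hα1 : α ≤ 1) (hX : inF α X)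
    {t : ℝ} (ht : 0 ≤ t) :
    ∃ c : ℝ, Usol α X t = fun ξ => X.U ξ +
      ((1/2) * (∫ η in Set.Iio ξ, deriv X.V η * wfun α X t η) - c) := by
  have hiV := integrable_derivV hX
  set M : ℝ := ∫ η, |deriv X.V η| with hM
  have habs : ∀ s η, |gI α X s η| ≤ |deriv X.V η| := fun s η => abs_gI_le hα0 hα1 X s η
  -- uniform bound on set integrals of |gI|
  have hsetbd : ∀ (s : ℝ) (A : Set ℝ), MeasurableSet A → (∫ η in A, ‖gI α X s η‖) ≤ M := by
    intro s A hA
    have h1 : (∫ η in A, ‖gI α X s η‖) ≤ ∫ η in A, |deriv X.V η| := by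
      refine integral_mono_ae ((integrable_gI hα0 hα1 hX s).norm.integrableOn)
        hiV.abs.integrableOn (ae_restrict_of_ae (Eventually.of_forall fun η => ?_))
      simpa [Real.norm_eq_abs] using habs s η
    refine h1.trans (setIntegral_le_integral hiV.abs
      (Eventually.of_forall fun η => abs_nonneg _))
  -- measurability of s ↦ Vsol α X s ξ
  have hmeasV : ∀ ξ : ℝ, Measurable fun s => Vsol α X s ξ := by
    intro ξ
    have := ((measurable_gI_uncurry α X).stronglyMeasurable).integral_prod_right'
      (ν := volume.restrict (Set.Iio ξ))
    exact this.measurable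
  have hbdV : ∀ s ξ, |Vsol α X s ξ| ≤ M := by
    intro s ξ
    calc |Vsol α X s ξ| = ‖∫ η in Set.Iio ξ, gI α X s η‖ := by rw [Real.norm_eq_abs]; rfl
      _ ≤ ∫ η in Set.Iio ξ, ‖gI α X s η‖ := norm_integral_le_integral_norm _
      _ ≤ M := hsetbd s _ measurableSet_Iio
  -- the limit term
  have hLeq : ∀ s : ℝ, limUnder atTop (Vsol α X s) = ∫ η, gI α X s η := by
    intro s
    exact Tendsto.limUnder_eq (tendsto_primitive_atTop (measurable_gI α X s)
      (integrable_gI hα0 hα1 hX s))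
  have hmeasL : Measurable fun s => ∫ η, gI α X s η :=
    (((measurable_gI_uncurry α X).stronglyMeasurable).integral_prod_right'
      (ν := volume)).measurable
  have hbdL : ∀ s, |∫ η, gI α X s η| ≤ M := by
    intro s
    calc |∫ η, gI α X s η| ≤ ∫ η, ‖gI α X s η‖ := by
          rw [← Real.norm_eq_abs]; exact norm_integral_le_integral_norm _
      _ = ∫ η in Set.univ, ‖gI α X s η‖ := by rw [setIntegral_univ]
      _ ≤ M := hsetbd s _ MeasurableSet.univ
  -- interval integrabilities
  have hIV : ∀ ξ, IntervalIntegrable (fun s => Vsol α X s ξ) volume 0 t := by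
    intro ξ
    rw [intervalIntegrable_iff, Set.uIoc_of_le ht]
    refine (integrableOn_const measure_Ioc_lt_top.ne).mono' (g := fun _ => M)
      (hmeasV ξ).aestronglyMeasurable.restrict
      (Eventually.of_forall fun s => by simpa [Real.norm_eq_abs] using hbdV s ξ)
  have hIL : IntervalIntegrable (fun s => limUnder atTop (Vsol α X s)) volume 0 t := by
    rw [intervalIntegrable_iff, Set.uIoc_of_le ht]
    have : (fun s => limUnder atTop (Vsol α X s)) = fun s => ∫ η, gI α X s η :=
      funext hLeq
    rw [this]
    refine (integrableOn_const measure_Ioc_lt_top.ne).mono' (g := fun _ => M)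
      hmeasL.aestronglyMeasurable.restrict
      (Eventually.of_forall fun s => by simpa [Real.norm_eq_abs] using hbdL s)
  refine ⟨(1/4) * ∫ s in (0:ℝ)..t, limUnder atTop (Vsol α X s), ?_⟩
  funext ξ
  have hsplit : Usol α X t ξ = X.U ξ + ((1/2) * ∫ s in (0:ℝ)..t, Vsol α X s ξ)
      - (1/4) * ∫ s in (0:ℝ)..t, limUnder atTop (Vsol α X s) := by
    rw [Usol]
    rw [intervalIntegral.integral_sub ((hIV ξ).const_mul (1/2)) (hIL.const_mul (1/4)),
      intervalIntegral.integral_const_mul, intervalIntegral.integral_const_mul]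
    ring
  -- Fubini
  have hFub : (∫ s in (0:ℝ)..t, Vsol α X s ξ) =
      ∫ η in Set.Iio ξ, deriv X.V η * wfun α X t η := by
    rw [intervalIntegral.integral_of_le ht]
    have hint : Integrable (Function.uncurry fun s η => gI α X s η)
        ((volume.restrict (Set.Ioc 0 t)).prod (volume.restrict (Set.Iio ξ))) := by
      refine (integrable_prod_iff
        ((measurable_gI_uncurry α X).aestronglyMeasurable)).2 ⟨?_, ?_⟩
      · refine Eventually.of_forall fun s => ?_
        refine (hiV.abs.restrict (s := Set.Iio ξ)).mono'
          ((measurable_gI α X s).aestronglyMeasurable.restrict)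
          (Eventually.of_forall fun η => by simpa [Real.norm_eq_abs] using habs s η)
      · refine (integrableOn_const measure_Ioc_lt_top.ne).mono' (g := fun _ => M)
          ?_ (Eventually.of_forall fun s => ?_)
        · exact (((measurable_gI_uncurry α X).norm.stronglyMeasurable).integral_prod_right'
            (ν := volume.restrict (Set.Iio ξ))).measurable.aestronglyMeasurable.restrict
        · rw [Real.norm_eq_abs, abs_of_nonneg (integral_nonneg fun η => norm_nonneg _)]
          exact hsetbd s _ measurableSet_Iio
    have hswap := MeasureTheory.integral_integral_swap (f := fun s η => gI α X s η) hint
    have hVs : ∀ s, Vsol α X s ξ = ∫ η in Set.Iio ξ, gI α X s η := fun s => rfl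
    calc (∫ s in Set.Ioc (0:ℝ) t, Vsol α X s ξ)
        = ∫ s in Set.Ioc (0:ℝ) t, ∫ η in Set.Iio ξ, gI α X s η := by
          exact integral_congr_ae (Eventually.of_forall fun s => hVs s)
      _ = ∫ η in Set.Iio ξ, ∫ s in Set.Ioc (0:ℝ) t, gI α X s η := hswap
      _ = ∫ η in Set.Iio ξ, deriv X.V η * wfun α X t η := by
          refine integral_congr_ae (Eventually.of_forall fun η => ?_)
          calc (∫ s in Set.Ioc (0:ℝ) t, gI α X s η)
              = ∫ s in Set.Ioc (0:ℝ) t, deriv X.V η *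
                  (1 - α * (breakSet X s).indicator (fun _ => (1:ℝ)) η) := rfl
            _ = deriv X.V η * ∫ s in Set.Ioc (0:ℝ) t,
                  (1 - α * (breakSet X s).indicator (fun _ => (1:ℝ)) η) :=
                integral_const_mul _ _
            _ = deriv X.V η * wfun α X t η := by
                rw [wfun, intervalIntegral.integral_of_le ht]
  rw [hsplit, hFub]
  ring

/-! ### Derivative of `Usol` -/

theorem deriv_Usol_ae {α : ℝ} {X : LagQuad} (hα0 : 0 ≤ α) (hα1 : α ≤ 1) (hX : inF α X)
    {t : ℝ} (ht : 0 ≤ t) :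
    ∀ᵐ ξ ∂(volume : Measure ℝ), deriv (Usol α X t) ξ =
      deriv X.U ξ + (1/2) * (deriv X.V ξ * wfun α X t ξ) := by
  obtain ⟨c, hc⟩ := Usol_repr hα0 hα1 hX ht
  set hFun : ℝ → ℝ := fun η => deriv X.V η * wfun α X t η with hhFun
  have hwfuneq : ∀ η, wfun α X t η = ∫ s in Set.Ioc (0:ℝ) t,
      (1 - α * (breakSet X s).indicator (fun _ => (1:ℝ)) η) := by
    intro η
    rw [wfun, intervalIntegral.integral_of_le ht]
  have hwmeas : Measurable fun η => wfun α X t η := by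
    have hm2 : Measurable fun p : ℝ × ℝ =>
        (1 - α * (breakSet X p.1).indicator (fun _ => (1:ℝ)) p.2) :=
      measurable_const.sub ((measurable_breakIndicator X).const_mul α)
    have hml := (hm2.stronglyMeasurable.integral_prod_left'
      (μ := volume.restrict (Set.Ioc 0 t))).measurable
    have hfe : (fun η => wfun α X t η) = fun η => ∫ s in Set.Ioc (0:ℝ) t,
        (1 - α * (breakSet X s).indicator (fun _ => (1:ℝ)) η) := funext hwfuneq
    rw [hfe]
    exact hml
  have hmeas : Measurable hFun := (measurable_deriv X.V).mul hwmeas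
  have hnn : ∀ᵐ η ∂(volume : Measure ℝ), 0 ≤ hFun η := by
    filter_upwards [hX.2.2.2.2.2.2.2.2.1] with η hη
    exact mul_nonneg hη.1 (wfun_nonneg hα0 hα1 ht η)
  have hint : Integrable hFun volume := by
    refine ((integrable_derivV hX).abs.mul_const t).mono' hmeas.aestronglyMeasurable
      (Eventually.of_forall fun η => ?_)
    rw [Real.norm_eq_abs, hhFun]
    simp only
    rw [abs_mul]
    refine mul_le_mul_of_nonneg_left ?_ (abs_nonneg _)
    rw [abs_of_nonneg (wfun_nonneg hα0 hα1 ht η)]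
    exact wfun_le hα0 hα1 ht η
  obtain ⟨K, hK⟩ := hX.2.1.2
  filter_upwards [ae_hasDerivAt_primitive hmeas hint hnn, hK.ae_differentiableAt]
    with ξ hprim hdiff
  have hD : HasDerivAt (fun ξ => X.U ξ + ((1/2) * (∫ η in Set.Iio ξ, hFun η) - c))
      (deriv X.U ξ + ((1/2) * hFun ξ)) ξ := by
    have h2 := (hprim.const_mul (1/2 : ℝ)).sub_const c
    exact hdiff.hasDerivAt.add h2
  rw [hc]
  rw [hD.deriv]

/-! ### `tauOf` facts -/

theorem tauOf_of_nonneg {X : LagQuad} {ξ : ℝ} (h : 0 ≤ deriv X.U ξ) :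
    tauOf X ξ = 0 ∨ tauOf X ξ = ⊤ := by
  rw [tauOf, if_neg (not_lt.2 h)]
  split_ifs <;> simp

theorem not_mem_breakSet_of_nonneg {X : LagQuad} {ξ t : ℝ} (h : 0 ≤ deriv X.U ξ) :
    ξ ∉ breakSet X t := by
  intro hmem
  rcases tauOf_of_nonneg h with h0 | h0
  · exact hmem.1.ne' h0
  · have h2 := hmem.2
    rw [h0] at h2
    exact (lt_irrefl ⊤ (lt_of_le_of_lt h2 ENNReal.ofReal_lt_top)).elim

theorem tauOf_of_neg {X : LagQuad} {ξ : ℝ} (h : deriv X.U ξ < 0) :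
    tauOf X ξ = ENNReal.ofReal (-2 * deriv X.y ξ / deriv X.U ξ) := by
  rw [tauOf, if_pos h]

/-! ### `GfunT` evaluation -/

theorem GfunT_of_mem {τ₁ τ₂ : ℝ → ℝ≥0∞} {t : ℝ} {Y₁ Y₂ : LagQuad} {ξ : ℝ}
    (h : ξ ∈ OmegaT τ₁ τ₂ t Y₁ Y₂) :
    GfunT τ₁ τ₂ t Y₁ Y₂ ξ = |deriv Y₁.V ξ - deriv Y₂.V ξ| := by
  rw [GfunT, Set.indicator_of_mem h, Set.indicator_of_notMem (by simpa using h), add_zero]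

theorem GfunT_of_not_mem {τ₁ τ₂ : ℝ → ℝ≥0∞} {t : ℝ} {Y₁ Y₂ : LagQuad} {ξ : ℝ}
    (h : ξ ∉ OmegaT τ₁ τ₂ t Y₁ Y₂) :
    GfunT τ₁ τ₂ t Y₁ Y₂ ξ = max (deriv Y₁.V ξ) (deriv Y₂.V ξ) := by
  rw [GfunT, Set.indicator_of_notMem h, Set.indicator_of_mem (by simpa using h), zero_add]

/-! ### the arithmetic key lemma -/

theorem du_nonneg_key {α t y u v r : ℝ} (hα0 : 0 ≤ α) (hα1 : α ≤ 1) (ht : 0 ≤ t)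
    (hy : 0 ≤ y) (hv : 0 ≤ v) (hyv : y * v = u^2)
    (hr : u < 0 → r = -2 * y / u) (hrle : r ≤ t) (hrnn : 0 ≤ r) :
    0 ≤ u + (1/2) * (v * (t - α * (t - r))) := by
  rcases lt_or_ge u 0 with hu | hu
  · have hu' : u ≠ 0 := hu.ne
    have hvr : v * r = -2 * u := by
      rw [hr hu]
      field_simp
      nlinarith [hyv]
    have h1 : 0 ≤ (1 - α) * (v * (t - r)) :=
      mul_nonneg (by linarith) (mul_nonneg hv (by linarith))
    nlinarith [h1, hvr]
  · have h1 : 0 ≤ v * ((1 - α) * t) := mul_nonneg hv (mul_nonneg (by linarith) ht)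
    have h2 : 0 ≤ v * (α * r) := mul_nonneg hv (mul_nonneg hα0 hrnn)
    nlinarith [h1, h2]

theorem abs_sub_le_max {a b : ℝ} (ha : 0 ≤ a) (hb : 0 ≤ b) : |a - b| ≤ max a b :=
  abs_sub_le_iff.2 ⟨(sub_le_self a hb).trans (le_max_left a b),
    (sub_le_self b ha).trans (le_max_right a b)⟩

end S4aux
end S4auxsec


/-- the `L¹` and `L²` norms of `G₁₂` are non-increasing in time:
`‖G₁₂(·,t)‖_{L¹} ≤ ‖G₁₂(·,0)‖_{L¹}` and `‖G₁₂(·,t)‖_{L²} ≤ ‖G₁₂(·,0)‖_{L²}`. -/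
theorem statement4 (α : ℝ) (hα : α ∈ Set.Icc (0 : ℝ) 1)
    (X₁ X₂ : LagQuad) (h₁ : inF α X₁) (h₂ : inF α X₂)
    (t : ℝ) (ht : 0 ≤ t) :
    eLpNorm (GfunT (tauOf X₁) (tauOf X₂) t (sol α X₁ t) (sol α X₂ t)) 1 volume ≤
        eLpNorm (GfunT (tauOf X₁) (tauOf X₂) 0 (sol α X₁ 0) (sol α X₂ 0)) 1 volume ∧
      eLpNorm (GfunT (tauOf X₁) (tauOf X₂) t (sol α X₁ t) (sol α X₂ t)) 2 volume ≤
        eLpNorm (GfunT (tauOf X₁) (tauOf X₂) 0 (sol α X₁ 0) (sol α X₂ 0)) 2 volume := by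
  obtain ⟨hα0, hα1⟩ := hα
  have key : ∀ᵐ ξ ∂(volume : Measure ℝ),
      ‖GfunT (tauOf X₁) (tauOf X₂) t (sol α X₁ t) (sol α X₂ t) ξ‖ ≤
      ‖GfunT (tauOf X₁) (tauOf X₂) 0 (sol α X₁ 0) (sol α X₂ 0) ξ‖ := by
    filter_upwards [S4aux.deriv_Vsol_ae hα0 hα1 h₁ t, S4aux.deriv_Vsol_ae hα0 hα1 h₂ t,
      S4aux.deriv_Vsol_ae hα0 hα1 h₁ 0, S4aux.deriv_Vsol_ae hα0 hα1 h₂ 0,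
      S4aux.deriv_Usol_ae hα0 hα1 h₁ ht, S4aux.deriv_Usol_ae hα0 hα1 h₂ ht,
      h₁.2.2.2.2.1, h₂.2.2.2.2.1,
      h₁.2.2.2.2.2.2.2.1, h₂.2.2.2.2.2.2.2.1,
      h₁.2.2.2.2.2.2.2.2.1, h₂.2.2.2.2.2.2.2.2.1]
      with ξ hV1t hV2t hV10 hV20 hU1t hU2t hy1 hy2 hyv1 hyv2 hv1' hv2'
    obtain ⟨hvn1, -⟩ := hv1'
    obtain ⟨hvn2, -⟩ := hv2'
    simp only [S4aux.gI] at hV1t hV2t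
    rw [S4aux.gI_zero] at hV10
    rw [S4aux.gI_zero] at hV20
    have hb1 := S4aux.ind_mem_01 (breakSet X₁ t) ξ
    have hb2 := S4aux.ind_mem_01 (breakSet X₂ t) ξ
    have hdvt1 : 0 ≤ deriv (Vsol α X₁ t) ξ := by
      rw [hV1t]; exact mul_nonneg hvn1 (S4aux.factor_nonneg hα0 hα1 hb1)
    have hdvt2 : 0 ≤ deriv (Vsol α X₂ t) ξ := by
      rw [hV2t]; exact mul_nonneg hvn2 (S4aux.factor_nonneg hα0 hα1 hb2)
    have hdvle1 : deriv (Vsol α X₁ t) ξ ≤ deriv X₁.V ξ := by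
      rw [hV1t]; exact mul_le_of_le_one_right hvn1 (S4aux.factor_le_one hα0 hb1)
    have hdvle2 : deriv (Vsol α X₂ t) ξ ≤ deriv X₂.V ξ := by
      rw [hV2t]; exact mul_le_of_le_one_right hvn2 (S4aux.factor_le_one hα0 hb2)
    have hmemt_iff : ξ ∈ OmegaT (tauOf X₁) (tauOf X₂) t (sol α X₁ t) (sol α X₂ t) ↔
        ((0 ≤ deriv (Usol α X₁ t) ξ ∧ 0 ≤ deriv (Usol α X₂ t) ξ) ∨
         (ENNReal.ofReal t < tauOf X₁ ξ ∧ tauOf X₁ ξ = tauOf X₂ ξ ∧ tauOf X₂ ξ < ⊤)) := by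
      simp only [OmegaT, Aset, sol, Set.mem_union, Set.mem_inter_iff, Set.mem_setOf_eq]
    have hmem0_iff : ξ ∈ OmegaT (tauOf X₁) (tauOf X₂) 0 (sol α X₁ 0) (sol α X₂ 0) ↔
        ((0 ≤ deriv X₁.U ξ ∧ 0 ≤ deriv X₂.U ξ) ∨
         (ENNReal.ofReal 0 < tauOf X₁ ξ ∧ tauOf X₁ ξ = tauOf X₂ ξ ∧ tauOf X₂ ξ < ⊤)) := by
      simp only [OmegaT, Aset, sol, Set.mem_union, Set.mem_inter_iff, Set.mem_setOf_eq,
        S4aux.Usol_zero]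
    -- nonnegativity of both sides
    have hGt_nonneg : 0 ≤ GfunT (tauOf X₁) (tauOf X₂) t (sol α X₁ t) (sol α X₂ t) ξ := by
      by_cases hmt : ξ ∈ OmegaT (tauOf X₁) (tauOf X₂) t (sol α X₁ t) (sol α X₂ t)
      · rw [S4aux.GfunT_of_mem hmt]; exact abs_nonneg _
      · rw [S4aux.GfunT_of_not_mem hmt]; simp only [sol]
        exact le_trans hdvt1 (le_max_left _ _)
    have hG0_nonneg : 0 ≤ GfunT (tauOf X₁) (tauOf X₂) 0 (sol α X₁ 0) (sol α X₂ 0) ξ := by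
      by_cases hm0 : ξ ∈ OmegaT (tauOf X₁) (tauOf X₂) 0 (sol α X₁ 0) (sol α X₂ 0)
      · rw [S4aux.GfunT_of_mem hm0]; exact abs_nonneg _
      · rw [S4aux.GfunT_of_not_mem hm0]; simp only [sol]
        rw [hV10]
        exact le_trans hvn1 (le_max_left _ _)
    -- the main pointwise bound
    have hmain : GfunT (tauOf X₁) (tauOf X₂) t (sol α X₁ t) (sol α X₂ t) ξ ≤
        GfunT (tauOf X₁) (tauOf X₂) 0 (sol α X₁ 0) (sol α X₂ 0) ξ := by
      by_cases h0 : ξ ∈ OmegaT (tauOf X₁) (tauOf X₂) 0 (sol α X₁ 0) (sol α X₂ 0)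
      · have hG0 : GfunT (tauOf X₁) (tauOf X₂) 0 (sol α X₁ 0) (sol α X₂ 0) ξ =
            |deriv X₁.V ξ - deriv X₂.V ξ| := by
          rw [S4aux.GfunT_of_mem h0]; simp only [sol]; rw [hV10, hV20]
        rcases hmem0_iff.1 h0 with hA | hB
        · -- both slopes nonnegative initially
          have hnb1 : ξ ∉ breakSet X₁ t := S4aux.not_mem_breakSet_of_nonneg hA.1
          have hnb2 : ξ ∉ breakSet X₂ t := S4aux.not_mem_breakSet_of_nonneg hA.2
          have hv1t : deriv (Vsol α X₁ t) ξ = deriv X₁.V ξ := by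
            rw [hV1t, Set.indicator_of_notMem hnb1]; ring
          have hv2t : deriv (Vsol α X₂ t) ξ = deriv X₂.V ξ := by
            rw [hV2t, Set.indicator_of_notMem hnb2]; ring
          have hmemt : ξ ∈ OmegaT (tauOf X₁) (tauOf X₂) t (sol α X₁ t) (sol α X₂ t) := by
            refine hmemt_iff.2 (Or.inl ⟨?_, ?_⟩)
            · rw [hU1t]
              have hw := mul_nonneg hvn1 (S4aux.wfun_nonneg (X := X₁) hα0 hα1 ht ξ)
              linarith [hA.1]
            · rw [hU2t]
              have hw := mul_nonneg hvn2 (S4aux.wfun_nonneg (X := X₂) hα0 hα1 ht ξ)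
              linarith [hA.2]
          rw [hG0, S4aux.GfunT_of_mem hmemt]; simp only [sol]; rw [hv1t, hv2t]
        · -- common finite positive wave-breaking time
          have hτpos : 0 < tauOf X₁ ξ := by simpa using hB.1
          by_cases hbr : tauOf X₁ ξ ≤ ENNReal.ofReal t
          · have hmem1 : ξ ∈ breakSet X₁ t := ⟨hτpos, hbr⟩
            have hmem2 : ξ ∈ breakSet X₂ t := ⟨hB.2.1 ▸ hτpos, hB.2.1 ▸ hbr⟩
            have hv1t : deriv (Vsol α X₁ t) ξ = deriv X₁.V ξ * (1 - α) := by
              rw [hV1t, Set.indicator_of_mem hmem1]; ring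
            have hv2t : deriv (Vsol α X₂ t) ξ = deriv X₂.V ξ * (1 - α) := by
              rw [hV2t, Set.indicator_of_mem hmem2]; ring
            have hw1 : S4aux.wfun α X₁ t ξ = t - α * (t - (tauOf X₁ ξ).toReal) :=
              S4aux.wfun_eq_break ht hτpos hbr
            have hw2 : S4aux.wfun α X₂ t ξ = t - α * (t - (tauOf X₂ ξ).toReal) :=
              S4aux.wfun_eq_break ht (hB.2.1 ▸ hτpos) (hB.2.1 ▸ hbr)
            have hr1 : deriv X₁.U ξ < 0 →
                (tauOf X₁ ξ).toReal = -2 * deriv X₁.y ξ / deriv X₁.U ξ := by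
              intro hu
              rw [S4aux.tauOf_of_neg hu, ENNReal.toReal_ofReal
                (div_nonneg_of_nonpos (by linarith) hu.le)]
            have hr2 : deriv X₂.U ξ < 0 →
                (tauOf X₂ ξ).toReal = -2 * deriv X₂.y ξ / deriv X₂.U ξ := by
              intro hu
              rw [S4aux.tauOf_of_neg hu, ENNReal.toReal_ofReal
                (div_nonneg_of_nonpos (by linarith) hu.le)]
            have hrle1 : (tauOf X₁ ξ).toReal ≤ t := by
              have h := ENNReal.toReal_mono ENNReal.ofReal_ne_top hbr
              rwa [ENNReal.toReal_ofReal ht] at h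
            have hrle2 : (tauOf X₂ ξ).toReal ≤ t := by
              have h := ENNReal.toReal_mono ENNReal.ofReal_ne_top (hB.2.1 ▸ hbr)
              rwa [ENNReal.toReal_ofReal ht] at h
            have hdu1 : 0 ≤ deriv (Usol α X₁ t) ξ := by
              rw [hU1t, hw1]
              exact S4aux.du_nonneg_key hα0 hα1 ht hy1 hvn1 hyv1 hr1 hrle1
                ENNReal.toReal_nonneg
            have hdu2 : 0 ≤ deriv (Usol α X₂ t) ξ := by
              rw [hU2t, hw2]
              exact S4aux.du_nonneg_key hα0 hα1 ht hy2 hvn2 hyv2 hr2 hrle2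
                ENNReal.toReal_nonneg
            have hmemt : ξ ∈ OmegaT (tauOf X₁) (tauOf X₂) t (sol α X₁ t) (sol α X₂ t) :=
              hmemt_iff.2 (Or.inl ⟨hdu1, hdu2⟩)
            rw [hG0, S4aux.GfunT_of_mem hmemt]; simp only [sol]; rw [hv1t, hv2t]
            have hfac : deriv X₁.V ξ * (1 - α) - deriv X₂.V ξ * (1 - α) =
                (1 - α) * (deriv X₁.V ξ - deriv X₂.V ξ) := by ring
            rw [hfac, abs_mul, abs_of_nonneg (by linarith : (0:ℝ) ≤ 1 - α)]
            exact mul_le_of_le_one_left (abs_nonneg _) (by linarith)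
          · have hnb1 : ξ ∉ breakSet X₁ t := fun hm => hbr hm.2
            have hnb2 : ξ ∉ breakSet X₂ t := fun hm => hbr (hB.2.1 ▸ hm.2)
            have hv1t : deriv (Vsol α X₁ t) ξ = deriv X₁.V ξ := by
              rw [hV1t, Set.indicator_of_notMem hnb1]; ring
            have hv2t : deriv (Vsol α X₂ t) ξ = deriv X₂.V ξ := by
              rw [hV2t, Set.indicator_of_notMem hnb2]; ring
            have hmemt : ξ ∈ OmegaT (tauOf X₁) (tauOf X₂) t (sol α X₁ t) (sol α X₂ t) :=
              hmemt_iff.2 (Or.inr ⟨not_le.1 hbr, hB.2.1, hB.2.2⟩)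
            rw [hG0, S4aux.GfunT_of_mem hmemt]; simp only [sol]; rw [hv1t, hv2t]
      · have hG0 : GfunT (tauOf X₁) (tauOf X₂) 0 (sol α X₁ 0) (sol α X₂ 0) ξ =
            max (deriv X₁.V ξ) (deriv X₂.V ξ) := by
          rw [S4aux.GfunT_of_not_mem h0]; simp only [sol]; rw [hV10, hV20]
        rw [hG0]
        by_cases hmt : ξ ∈ OmegaT (tauOf X₁) (tauOf X₂) t (sol α X₁ t) (sol α X₂ t)
        · rw [S4aux.GfunT_of_mem hmt]; simp only [sol]
          exact (S4aux.abs_sub_le_max hdvt1 hdvt2).trans (max_le_max hdvle1 hdvle2)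
        · rw [S4aux.GfunT_of_not_mem hmt]; simp only [sol]
          exact max_le_max hdvle1 hdvle2
    rw [Real.norm_eq_abs, Real.norm_eq_abs, abs_of_nonneg hGt_nonneg,
      abs_of_nonneg hG0_nonneg]
    exact hmain
  exact ⟨eLpNorm_mono_ae key, eLpNorm_mono_ae key⟩
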